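/- Let β ∈ (0, 1/2] and define q := β (1−β)^{3/4} ∈ (0,1). Let (a_k)_{k≥1} be a nonnegative sequence and R ≥ 0 such that for all k ≥ 1, a_k ≤ √(1−β) · R/√k + q · a_{k−1}, with a_0 = 0. Then for all k ≥ 1: a_k ≤ √(1−β) · R · ∑_{t=0}^{k−1} q^t / √(k−t), and moreover, by Hölder's inequality with exponents 4 and 4/3, a_k ≤ √(1−β) · R · (∑_{t=1}^{k} 1/t²)^{1/4} · (∑_{t=0}^{∞} q^{4t/3})^{3/4}. -/

import Mathlib

/-- unrolling the recursion a_k ≤ √(1−β)·R/√k + q·a_{k−1} with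
q = β(1−β)^{3/4}, and the Hölder bound with exponents 4 and 4/3. -/
theorem recursion_unroll_holder_bound (β R : ℝ) (hβ0 : 0 < β) (hβ1 : β ≤ 1 / 2)
    (hR : 0 ≤ R) (a : ℕ → ℝ) (ha0 : a 0 = 0) (hpos : ∀ k, 0 ≤ a k)
    (hrec : ∀ k : ℕ, 1 ≤ k →
      a k ≤ Real.sqrt (1 - β) * R / Real.sqrt k +
        (β * (1 - β) ^ ((3 : ℝ) / 4)) * a (k - 1)) :
    ∀ k : ℕ, 1 ≤ k →
      a k ≤ Real.sqrt (1 - β) * R *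
          ∑ t ∈ Finset.range k,
            (β * (1 - β) ^ ((3 : ℝ) / 4)) ^ t / Real.sqrt (k - t) ∧
      a k ≤ Real.sqrt (1 - β) * R *
          (∑ t ∈ Finset.Icc 1 k, (1 : ℝ) / (t : ℝ) ^ 2) ^ ((1 : ℝ) / 4) *
          (∑' t : ℕ, (β * (1 - β) ^ ((3 : ℝ) / 4)) ^ ((4 * (t : ℝ)) / 3)) ^ ((3 : ℝ) / 4) := by
  set q : ℝ := β * (1 - β) ^ ((3 : ℝ) / 4) with hqdef
  set c : ℝ := Real.sqrt (1 - β) * R with hcdef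
  have hβ' : 0 < 1 - β := by linarith
  have hq0 : 0 < q := mul_pos hβ0 (Real.rpow_pos_of_pos hβ' _)
  have hq1 : q < 1 := by
    have h1 : (1 - β) ^ ((3 : ℝ) / 4) ≤ 1 :=
      Real.rpow_le_one hβ'.le (by linarith) (by norm_num)
    calc q ≤ (1 / 2) * 1 :=
          mul_le_mul hβ1 h1 (Real.rpow_pos_of_pos hβ' _).le (by norm_num)
      _ < 1 := by norm_num
  have hc0 : 0 ≤ c := mul_nonneg (Real.sqrt_nonneg _) hR
  -- Part 1: unrolled bound, by induction.
  have part1 : ∀ k : ℕ, 1 ≤ k →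
      a k ≤ c * ∑ t ∈ Finset.range k, q ^ t / Real.sqrt ((k : ℝ) - (t : ℝ)) := by
    intro k hk
    induction k, hk using Nat.le_induction with
    | base =>
      have h := hrec 1 le_rfl
      simp [ha0] at h
      simpa using h
    | succ n hn ih =>
      have h := hrec (n + 1) (by omega)
      rw [Nat.add_sub_cancel] at h
      have h2 : q * a n ≤ q * (c * ∑ t ∈ Finset.range n, q ^ t / Real.sqrt ((n : ℝ) - t)) :=
        mul_le_mul_of_nonneg_left ih hq0.le
      have key : c * ∑ t ∈ Finset.range (n + 1), q ^ t / Real.sqrt (((n + 1 : ℕ) : ℝ) - (t : ℝ))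
          = c / Real.sqrt ((n + 1 : ℕ) : ℝ)
            + q * (c * ∑ t ∈ Finset.range n, q ^ t / Real.sqrt ((n : ℝ) - t)) := by
        rw [Finset.sum_range_succ']
        have hcongr : ∀ t ∈ Finset.range n,
            q ^ (t + 1) / Real.sqrt (((n + 1 : ℕ) : ℝ) - ((t + 1 : ℕ) : ℝ))
              = q * (q ^ t / Real.sqrt ((n : ℝ) - t)) := by
          intro t ht
          have harg : (((n + 1 : ℕ) : ℝ)) - ((t + 1 : ℕ) : ℝ) = (n : ℝ) - t := by
            push_cast; ring
          rw [harg, pow_succ]; ring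
        rw [Finset.sum_congr rfl hcongr, ← Finset.mul_sum]
        push_cast
        rw [pow_zero, sub_zero]
        ring
      calc a (n + 1) ≤ c / Real.sqrt ((n + 1 : ℕ) : ℝ) + q * a n := by
            push_cast at h ⊢; exact h
        _ ≤ c / Real.sqrt ((n + 1 : ℕ) : ℝ)
              + q * (c * ∑ t ∈ Finset.range n, q ^ t / Real.sqrt ((n : ℝ) - t)) := by
            linarith
        _ = c * ∑ t ∈ Finset.range (n + 1), q ^ t / Real.sqrt (((n + 1 : ℕ) : ℝ) - (t : ℝ)) :=
            key.symm
  intro k hk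
  refine ⟨part1 k hk, ?_⟩
  -- Part 2: Hölder bound.
  have hsummand : ∀ t ∈ Finset.range k,
      q ^ t / Real.sqrt ((k : ℝ) - t) = (1 / Real.sqrt ((k : ℝ) - t)) * q ^ t := by
    intro t _; ring
  have hpq : Real.HolderConjugate 4 (4 / 3) := Real.holderConjugate_iff.mpr ⟨by norm_num, by norm_num⟩
  have holder := Real.inner_le_Lp_mul_Lq_of_nonneg (s := Finset.range k)
    (f := fun t => 1 / Real.sqrt ((k : ℝ) - t)) (g := fun t => q ^ t) hpq
    (fun i _ => by positivity) (fun i _ => by positivity)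
  -- identify the A factor
  have hA : ∑ t ∈ Finset.range k, (1 / Real.sqrt ((k : ℝ) - t)) ^ (4 : ℝ)
      = ∑ t ∈ Finset.Icc 1 k, (1 : ℝ) / (t : ℝ) ^ 2 := by
    have step1 : ∀ t ∈ Finset.range k,
        (1 / Real.sqrt ((k : ℝ) - t)) ^ (4 : ℝ) = (1 : ℝ) / ((k - t : ℕ) : ℝ) ^ 2 := by
      intro t ht
      rw [Finset.mem_range] at ht
      have hle : (t : ℝ) ≤ (k : ℝ) := by exact_mod_cast ht.le
      have hnn : (0 : ℝ) ≤ (k : ℝ) - t := by linarith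
      have hcast : ((k - t : ℕ) : ℝ) = (k : ℝ) - t := by
        push_cast [Nat.cast_sub ht.le]; ring
      rw [hcast]
      rw [show ((4 : ℝ)) = ((4 : ℕ) : ℝ) by norm_num, Real.rpow_natCast]
      rw [div_pow, one_pow]
      congr 1
      have : Real.sqrt ((k : ℝ) - t) ^ 4 = (Real.sqrt ((k : ℝ) - t) ^ 2) ^ 2 := by ring
      rw [this, Real.sq_sqrt hnn]
    rw [Finset.sum_congr rfl step1]
    refine Finset.sum_nbij' (fun t => k - t) (fun t => k - t) ?_ ?_ ?_ ?_ ?_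
    · intro t ht; rw [Finset.mem_range] at ht; show k - t ∈ Finset.Icc 1 k
      rw [Finset.mem_Icc]; omega
    · intro t ht; rw [Finset.mem_Icc] at ht; show k - t ∈ Finset.range k
      rw [Finset.mem_range]; omega
    · intro t ht; rw [Finset.mem_range] at ht; show k - (k - t) = t; omega
    · intro t ht; rw [Finset.mem_Icc] at ht; show k - (k - t) = t; omega
    · intro t _; rfl
  -- B factor: finite sum bounded by tsum
  have hsummable : Summable (fun t : ℕ => q ^ ((4 * (t : ℝ)) / 3)) := by
    have heq : (fun t : ℕ => q ^ ((4 * (t : ℝ)) / 3)) = fun t : ℕ => (q ^ ((4 : ℝ) / 3)) ^ t := by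
      funext t
      rw [← Real.rpow_natCast (q ^ ((4 : ℝ) / 3)) t, ← Real.rpow_mul hq0.le]
      congr 1; ring
    rw [heq]
    exact summable_geometric_of_lt_one (Real.rpow_nonneg hq0.le _)
      (Real.rpow_lt_one hq0.le hq1 (by norm_num))
  have hBterm : ∀ t ∈ Finset.range k, (q ^ t) ^ ((4 : ℝ) / 3) = q ^ ((4 * (t : ℝ)) / 3) := by
    intro t _
    rw [← Real.rpow_natCast q t, ← Real.rpow_mul hq0.le]
    congr 1; ring
  have hB : ∑ t ∈ Finset.range k, (q ^ t) ^ ((4 : ℝ) / 3)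
      ≤ ∑' t : ℕ, q ^ ((4 * (t : ℝ)) / 3) := by
    rw [Finset.sum_congr rfl hBterm]
    exact Summable.sum_le_tsum _ (fun i _ => Real.rpow_nonneg hq0.le _) hsummable
  have hBnn : (0 : ℝ) ≤ ∑ t ∈ Finset.range k, (q ^ t) ^ ((4 : ℝ) / 3) :=
    Finset.sum_nonneg fun i _ => Real.rpow_nonneg (pow_nonneg hq0.le _) _
  have hAnn : (0 : ℝ) ≤ (∑ t ∈ Finset.Icc 1 k, (1 : ℝ) / (t : ℝ) ^ 2) ^ ((1 : ℝ) / 4) :=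
    Real.rpow_nonneg (Finset.sum_nonneg fun i _ => by positivity) _
  have hBpow : (∑ t ∈ Finset.range k, (q ^ t) ^ ((4 : ℝ) / 3)) ^ ((3 : ℝ) / 4)
      ≤ (∑' t : ℕ, q ^ ((4 * (t : ℝ)) / 3)) ^ ((3 : ℝ) / 4) :=
    Real.rpow_le_rpow hBnn hB (by norm_num)
  have hS : ∑ t ∈ Finset.range k, q ^ t / Real.sqrt ((k : ℝ) - t)
      ≤ (∑ t ∈ Finset.Icc 1 k, (1 : ℝ) / (t : ℝ) ^ 2) ^ ((1 : ℝ) / 4)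
        * (∑' t : ℕ, q ^ ((4 * (t : ℝ)) / 3)) ^ ((3 : ℝ) / 4) := by
    rw [Finset.sum_congr rfl hsummand]
    calc ∑ t ∈ Finset.range k, (1 / Real.sqrt ((k : ℝ) - t)) * q ^ t
        ≤ (∑ t ∈ Finset.range k, (1 / Real.sqrt ((k : ℝ) - t)) ^ (4 : ℝ)) ^ ((1 : ℝ) / 4)
          * (∑ t ∈ Finset.range k, (q ^ t) ^ ((4 : ℝ) / 3)) ^ (1 / (4 / 3) : ℝ) := holder
      _ = (∑ t ∈ Finset.Icc 1 k, (1 : ℝ) / (t : ℝ) ^ 2) ^ ((1 : ℝ) / 4)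
          * (∑ t ∈ Finset.range k, (q ^ t) ^ ((4 : ℝ) / 3)) ^ ((3 : ℝ) / 4) := by
          rw [hA]; norm_num
      _ ≤ (∑ t ∈ Finset.Icc 1 k, (1 : ℝ) / (t : ℝ) ^ 2) ^ ((1 : ℝ) / 4)
          * (∑' t : ℕ, q ^ ((4 * (t : ℝ)) / 3)) ^ ((3 : ℝ) / 4) :=
          mul_le_mul_of_nonneg_left hBpow hAnn
  calc a k ≤ c * ∑ t ∈ Finset.range k, q ^ t / Real.sqrt ((k : ℝ) - t) := part1 k hk
    _ ≤ c * ((∑ t ∈ Finset.Icc 1 k, (1 : ℝ) / (t : ℝ) ^ 2) ^ ((1 : ℝ) / 4)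
          * (∑' t : ℕ, q ^ ((4 * (t : ℝ)) / 3)) ^ ((3 : ℝ) / 4)) :=
        mul_le_mul_of_nonneg_left hS hc0
    _ = c * (∑ t ∈ Finset.Icc 1 k, (1 : ℝ) / (t : ℝ) ^ 2) ^ ((1 : ℝ) / 4)
          * (∑' t : ℕ, q ^ ((4 * (t : ℝ)) / 3)) ^ ((3 : ℝ) / 4) := by ring
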